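/- Let m ∈ (0,4], α > 0, and let f : [0, y_M) → ℝ (with 0 < y_M ≤ ∞) be four-times continuously differentiable with f > 0 on [0, y_M), satisfying the self-similar profile equation α·(f − y f') + m f^{m−1} f' f''' + f^m f'''' = 0 on (0, y_M), and suppose f admits no extension to a positive four-times continuously differentiable solution on a strictly larger interval [0, y_M') with y_M' > y_M. If at some y₀ ∈ (0, y_M) the Σ₋ condition holds (y₀·f'(y₀) < f(y₀), f''(y₀) < 0, f'''(y₀) < 0), then y_M < ∞ and f(y) → 0 as y → y_M from the left. -/

import Mathlib

open Set Filter Topology MeasureTheory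

noncomputable section

/-- `f` is four-times continuously differentiable on `s`, with successive
derivatives `f1`, `f2`, `f3`, `f4`. -/
def C4On (s : Set ℝ) (f f1 f2 f3 f4 : ℝ → ℝ) : Prop :=
  (∀ y ∈ s, HasDerivWithinAt f (f1 y) s y) ∧
  (∀ y ∈ s, HasDerivWithinAt f1 (f2 y) s y) ∧
  (∀ y ∈ s, HasDerivWithinAt f2 (f3 y) s y) ∧
  (∀ y ∈ s, HasDerivWithinAt f3 (f4 y) s y) ∧
  ContinuousOn f4 s

/-- The self-similar profile ODE
`α (f − y f') + m f^(m−1) f' f''' + f^m f'''' = 0` on the set `s`,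
for a function `f` with successive derivatives `f1`, `f3`, `f4`. -/
def ProfileODE (m α : ℝ) (s : Set ℝ) (f f1 f3 f4 : ℝ → ℝ) : Prop :=
  ∀ y ∈ s,
    α * (f y - y * f1 y) + m * f y ^ (m - 1) * f1 y * f3 y + f y ^ m * f4 y = 0




lemma antitoneOn_of_hasDerivAt_nonpos' {φ ψ : ℝ → ℝ} {a b : ℝ}
    (hd : ∀ y ∈ Icc a b, HasDerivAt φ (ψ y) y) (h0 : ∀ y ∈ Ioo a b, ψ y ≤ 0) :
    AntitoneOn φ (Icc a b) := by
  apply antitoneOn_of_deriv_nonpos (convex_Icc a b)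
      (fun y hy => (hd y hy).continuousAt.continuousWithinAt)
  · rw [interior_Icc]
    exact fun y hy => ((hd y (Ioo_subset_Icc_self hy)).differentiableAt).differentiableWithinAt
  · rw [interior_Icc]
    intro y hy
    rw [(hd y (Ioo_subset_Icc_self hy)).deriv]
    exact h0 y hy

lemma monotoneOn_of_hasDerivAt_nonneg' {φ ψ : ℝ → ℝ} {a b : ℝ}
    (hd : ∀ y ∈ Icc a b, HasDerivAt φ (ψ y) y) (h0 : ∀ y ∈ Ioo a b, 0 ≤ ψ y) :
    MonotoneOn φ (Icc a b) := by
  apply monotoneOn_of_deriv_nonneg (convex_Icc a b)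
      (fun y hy => (hd y hy).continuousAt.continuousWithinAt)
  · rw [interior_Icc]
    exact fun y hy => ((hd y (Ioo_subset_Icc_self hy)).differentiableAt).differentiableWithinAt
  · rw [interior_Icc]
    intro y hy
    rw [(hd y (Ioo_subset_Icc_self hy)).deriv]
    exact h0 y hy

lemma strictAntiOn_of_hasDerivAt_neg' {φ ψ : ℝ → ℝ} {a b : ℝ}
    (hd : ∀ y ∈ Icc a b, HasDerivAt φ (ψ y) y) (h0 : ∀ y ∈ Ioo a b, ψ y < 0) :
    StrictAntiOn φ (Icc a b) := by
  apply strictAntiOn_of_deriv_neg (convex_Icc a b)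
      (fun y hy => (hd y hy).continuousAt.continuousWithinAt)
  rw [interior_Icc]
  intro y hy
  rw [(hd y (Ioo_subset_Icc_self hy)).deriv]
  exact h0 y hy

lemma strictMonoOn_of_hasDerivAt_pos' {φ ψ : ℝ → ℝ} {a b : ℝ}
    (hd : ∀ y ∈ Icc a b, HasDerivAt φ (ψ y) y) (h0 : ∀ y ∈ Ioo a b, 0 < ψ y) :
    StrictMonoOn φ (Icc a b) := by
  apply strictMonoOn_of_deriv_pos (convex_Icc a b)
      (fun y hy => (hd y hy).continuousAt.continuousWithinAt)
  rw [interior_Icc]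
  intro y hy
  rw [(hd y (Ioo_subset_Icc_self hy)).deriv]
  exact h0 y hy

/-- Persistence of `f''' < 0` under the Σ₋ condition. -/
lemma f3_persists {m α : ℝ} (hα : 0 < α) {f f1 f2 f3 f4 : ℝ → ℝ} {y₀ b : ℝ}
    (hy₀ : 0 < y₀) (hb : y₀ ≤ b)
    (hf : ∀ y ∈ Icc y₀ b, HasDerivAt f (f1 y) y)
    (hf1 : ∀ y ∈ Icc y₀ b, HasDerivAt f1 (f2 y) y)
    (hf2 : ∀ y ∈ Icc y₀ b, HasDerivAt f2 (f3 y) y)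
    (hf3 : ∀ y ∈ Icc y₀ b, HasDerivAt f3 (f4 y) y)
    (hpos : ∀ y ∈ Icc y₀ b, 0 < f y)
    (hODE : ∀ y ∈ Icc y₀ b,
      α * (f y - y * f1 y) + m * f y ^ (m - 1) * f1 y * f3 y + f y ^ m * f4 y = 0)
    (hS1 : y₀ * f1 y₀ < f y₀) (hS2 : f2 y₀ < 0) (hS3 : f3 y₀ < 0) :
    ∀ y ∈ Icc y₀ b, f3 y < 0 := by
  by_contra hcon
  push_neg at hcon
  obtain ⟨z, hz, hz3⟩ := hcon
  set T : Set ℝ := Icc y₀ b ∩ f3 ⁻¹' (Ici 0) with hT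
  have hTne : T.Nonempty := ⟨z, hz, hz3⟩
  have hf3cont : ContinuousOn f3 (Icc y₀ b) :=
    fun y hy => (hf3 y hy).continuousAt.continuousWithinAt
  have hTclosed : IsClosed T :=
    hf3cont.preimage_isClosed_of_isClosed isClosed_Icc isClosed_Ici
  have hBdd : BddBelow T := ⟨y₀, fun t ht => ht.1.1⟩
  set y1 := sInf T with hy1
  have hy1T : y1 ∈ T := hTclosed.csInf_mem hTne hBdd
  have hy1b : y1 ∈ Icc y₀ b := hy1T.1
  have hf3y1 : 0 ≤ f3 y1 := hy1T.2
  have hlt : ∀ y, y₀ ≤ y → y < y1 → f3 y < 0 := by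
    intro y hy hyy1
    by_contra h
    push_neg at h
    have : y ∈ T := ⟨⟨hy, hyy1.le.trans hy1b.2⟩, h⟩
    exact absurd (csInf_le hBdd this) (not_le.2 hyy1)
  have hy₀y1 : y₀ < y1 := by
    rcases lt_or_eq_of_le hy1b.1 with h | h
    · exact h
    · exact absurd (h ▸ hf3y1) (not_le.2 hS3)
  have hf3y1eq : f3 y1 = 0 := by
    refine le_antisymm ?_ hf3y1
    have htd : Tendsto f3 (𝓝[<] y1) (𝓝 (f3 y1)) :=
      ((hf3 y1 hy1b).continuousAt.tendsto).mono_left nhdsWithin_le_nhds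
    refine le_of_tendsto htd ?_
    filter_upwards [Ioo_mem_nhdsLT_of_mem ⟨hy₀y1, le_refl y1⟩] with y hy
    exact (hlt y hy.1.le hy.2).le
  -- f2 < 0 on [y₀, y1]
  have hsub : Icc y₀ y1 ⊆ Icc y₀ b := Icc_subset_Icc le_rfl hy1b.2
  have hf2anti : StrictAntiOn f2 (Icc y₀ y1) :=
    strictAntiOn_of_hasDerivAt_neg' (fun y hy => hf2 y (hsub hy))
      (fun y hy => hlt y hy.1.le hy.2)
  have hf2neg : ∀ y ∈ Icc y₀ y1, f2 y < 0 := by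
    intro y hy
    rcases eq_or_lt_of_le hy.1 with h | h
    · exact h ▸ hS2
    · exact lt_trans (hf2anti (left_mem_Icc.2 hy₀y1.le) hy h) hS2
  -- h := f - y f1 strictly increasing
  have hhmono : StrictMonoOn (fun y => f y - y * f1 y) (Icc y₀ y1) := by
    apply strictMonoOn_of_hasDerivAt_pos' (ψ := fun y => f1 y - (1 * f1 y + y * f2 y))
    · intro y hy
      exact (hf y (hsub hy)).sub ((hasDerivAt_id y).mul (hf1 y (hsub hy)))
    · intro y hy
      have h2 : f2 y < 0 := hf2neg y (Ioo_subset_Icc_self hy)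
      have : 0 < y := lt_trans hy₀ hy.1
      nlinarith
  have hh1 : 0 < f y1 - y1 * f1 y1 := by
    have := hhmono (left_mem_Icc.2 hy₀y1.le) (right_mem_Icc.2 hy₀y1.le) hy₀y1
    simp only at this
    linarith
  -- ODE at y1 gives f4 y1 < 0
  have hode := hODE y1 hy1b
  rw [hf3y1eq] at hode
  have hfm : 0 < f y1 ^ m := Real.rpow_pos_of_pos (hpos y1 hy1b) m
  have hf4neg : f4 y1 < 0 := by
    have : f y1 ^ m * f4 y1 = -(α * (f y1 - y1 * f1 y1)) := by linarith [hode]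
    nlinarith
  -- but left slope of f3 at y1 is nonneg
  have hd3 : HasDerivWithinAt f3 (f4 y1) (Iio y1) y1 := (hf3 y1 hy1b).hasDerivWithinAt
  rw [hasDerivWithinAt_iff_tendsto_slope] at hd3
  have hdiff : Iio y1 \ {y1} = Iio y1 := diff_singleton_eq_self (by simp)
  rw [hdiff] at hd3
  have : (0:ℝ) ≤ f4 y1 := by
    refine ge_of_tendsto hd3 ?_
    filter_upwards [Ioo_mem_nhdsLT_of_mem ⟨hy₀y1, le_refl y1⟩] with y hy
    rw [slope_def_field]
    have h3 : f3 y < 0 := hlt y hy.1.le hy.2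
    have : y - y1 < 0 := by linarith [hy.2]
    rw [hf3y1eq]
    rw [sub_zero]
    exact div_nonneg_of_nonpos h3.le (by linarith)
  linarith


lemma glue_hasDeriv {r ε : ℝ} (hr : 0 < r) (hε : 0 < ε) {φ ψ σ τ : ℝ → ℝ}
    (hφ : ∀ y ∈ Ico 0 r, HasDerivWithinAt φ (ψ y) (Ico 0 r) y)
    (hσ : ∀ y ∈ Ico r (r + ε), HasDerivAt σ (τ y) y)
    (hφσ : Tendsto φ (𝓝[<] r) (𝓝 (σ r)))
    (hψτ : Tendsto ψ (𝓝[<] r) (𝓝 (τ r))) :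
    ∀ y ∈ Ico 0 (r + ε), HasDerivWithinAt (fun y => if y < r then φ y else σ y)
      ((fun y => if y < r then ψ y else τ y) y) (Ico 0 (r + ε)) y := by
  set G : ℝ → ℝ := fun y => if y < r then φ y else σ y with hG
  have hGr : G r = σ r := by simp [hG]
  have hφat : ∀ x ∈ Ioo 0 r, HasDerivAt G (ψ x) x := by
    intro x hx
    have hmem : Ico 0 r ∈ 𝓝 x :=
      mem_of_superset (isOpen_Ioo.mem_nhds hx) Ioo_subset_Ico_self
    have h := (hφ x ⟨hx.1.le, hx.2⟩).hasDerivAt hmem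
    refine h.congr_of_eventuallyEq ?_
    filter_upwards [Iio_mem_nhds hx.2] with z hz
    simp [hG, show z < r from hz]
  intro y hy
  rcases lt_trichotomy y r with hyr | hyq | hyr
  · have hset : Ico 0 (r + ε) ∩ Iio r = Ico 0 r := by
      rw [Ico_inter_Iio, min_eq_right (by linarith)]
    have h1 : HasDerivWithinAt φ (ψ y) (Ico 0 (r + ε)) y := by
      have := hφ y ⟨hy.1, hyr⟩
      rw [← hset] at this
      exact (hasDerivWithinAt_inter (Iio_mem_nhds hyr)).1 this
    have h2 : HasDerivWithinAt G (ψ y) (Ico 0 (r + ε)) y := by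
      refine h1.congr_of_eventuallyEq ?_ (by simp [hG, hyr])
      filter_upwards [mem_nhdsWithin_of_mem_nhds (Iio_mem_nhds hyr)] with z hz
      simp [hG, show z < r from hz]
    simpa [hyr] using h2
  · subst hyq
    have hleft : HasDerivWithinAt G (τ y) (Iic y) y := by
      apply hasDerivWithinAt_Iic_of_tendsto_deriv (s := Ioo 0 y)
      · exact fun x hx => ((hφat x hx).differentiableAt).differentiableWithinAt
      · unfold ContinuousWithinAt
        rw [hGr]
        refine (hφσ.mono_left (nhdsWithin_mono _ Ioo_subset_Iio_self)).congr' ?_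
        filter_upwards [self_mem_nhdsWithin] with z hz
        simp [hG, show z < y from hz.2]
      · exact Ioo_mem_nhdsLT_of_mem ⟨hr, le_rfl⟩
      · refine hψτ.congr' ?_
        filter_upwards [Ioo_mem_nhdsLT_of_mem (show y ∈ Ioc (0:ℝ) y from ⟨hr, le_rfl⟩)]
          with z hz
        exact ((hφat z hz).deriv).symm
    have hright : HasDerivWithinAt G (τ y) (Ici y) y := by
      refine ((hσ y ⟨le_rfl, by linarith⟩).hasDerivWithinAt).congr ?_ (by simp [hG])
      intro z hz
      simp [hG, not_lt.2 (mem_Ici.1 hz)]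
    have hval : ((fun y' => if y' < y then ψ y' else τ y') y) = τ y := by simp
    rw [hval]
    exact (hleft.union hright).mono (by rw [Iic_union_Ici]; exact subset_univ _)
  · have h := hσ y ⟨hyr.le, hy.2⟩
    have h2 : HasDerivAt G (τ y) y := by
      refine h.congr_of_eventuallyEq ?_
      filter_upwards [Ioi_mem_nhds hyr] with z hz
      simp [hG, not_lt.2 (le_of_lt (mem_Ioi.1 hz))]
    simpa [not_lt.2 hyr.le] using h2.hasDerivWithinAt


lemma local_solution (m α : ℝ) {ℓ : ℝ} (L1 L2 L3 : ℝ) (r : ℝ) (hℓ : 0 < ℓ) :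
    ∃ (ε : ℝ) (σ σ1 σ2 σ3 : ℝ → ℝ), 0 < ε ∧
      σ r = ℓ ∧ σ1 r = L1 ∧ σ2 r = L2 ∧ σ3 r = L3 ∧
      (∀ y ∈ Ico r (r + ε), 0 < σ y) ∧
      (∀ y ∈ Ico r (r + ε), HasDerivAt σ (σ1 y) y) ∧
      (∀ y ∈ Ico r (r + ε), HasDerivAt σ1 (σ2 y) y) ∧
      (∀ y ∈ Ico r (r + ε), HasDerivAt σ2 (σ3 y) y) ∧
      (∀ y ∈ Ico r (r + ε), HasDerivAt σ3
        ((-α * (σ y - y * σ1 y) - m * σ y ^ (m-1) * σ1 y * σ3 y) * ((σ y) ^ m)⁻¹) y) := by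
  classical
  set x₀ : Fin 5 → ℝ := ![ℓ, L1, L2, L3, r] with hx₀
  set v : (Fin 5 → ℝ) → (Fin 5 → ℝ) := fun p =>
    ![p 1, p 2, p 3, (-α * (p 0 - p 4 * p 1) - m * p 0 ^ (m-1) * p 1 * p 3) * ((p 0) ^ m)⁻¹, 1]
    with hv
  have hx00 : x₀ 0 = ℓ := by simp [hx₀]
  have hproj : ∀ j : Fin 5, ContDiffAt ℝ 1 (fun p : Fin 5 → ℝ => p j) x₀ :=
    fun j => (ContinuousLinearMap.proj j : (Fin 5 → ℝ) →L[ℝ] ℝ).contDiff.contDiffAt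
  have hne : x₀ 0 ≠ 0 := by rw [hx00]; exact hℓ.ne'
  have hrpow1 : ContDiffAt ℝ 1 (fun p : Fin 5 → ℝ => (p 0) ^ (m-1)) x₀ :=
    ContDiffAt.comp (g := fun x : ℝ => x ^ (m-1)) x₀ (Real.contDiffAt_rpow_const_of_ne hne) (hproj 0)
  have hrpowm : ContDiffAt ℝ 1 (fun p : Fin 5 → ℝ => (p 0) ^ m) x₀ :=
    ContDiffAt.comp (g := fun x : ℝ => x ^ m) x₀ (Real.contDiffAt_rpow_const_of_ne hne) (hproj 0)
  have hrpowm_ne : (fun p : Fin 5 → ℝ => (p 0) ^ m) x₀ ≠ 0 := by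
    simp only [hx00]
    exact (Real.rpow_pos_of_pos hℓ m).ne'
  have hcomp3 : ContDiffAt ℝ 1 (fun p : Fin 5 → ℝ =>
      (-α * (p 0 - p 4 * p 1) - m * p 0 ^ (m-1) * p 1 * p 3) * ((p 0) ^ m)⁻¹) x₀ := by
    exact ((((contDiffAt_const (c := -α)).mul ((hproj 0).sub ((hproj 4).mul (hproj 1)))).sub
      ((((contDiffAt_const (c := m)).mul hrpow1).mul (hproj 1)).mul (hproj 3))).mul
      (hrpowm.inv hrpowm_ne))
  have hvc : ContDiffAt ℝ 1 v x₀ := by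
    rw [contDiffAt_pi]
    intro i
    fin_cases i
    · simpa [hv] using hproj 1
    · simpa [hv] using hproj 2
    · simpa [hv] using hproj 3
    · simpa [hv] using hcomp3
    · simpa [hv] using contDiffAt_const (c := (1:ℝ))
  obtain ⟨sol, hsol0, ε0, hε0, hsol⟩ := hvc.exists_forall_mem_closedBall_exists_eq_forall_mem_Ioo_hasDerivAt₀ r
  have hcomp : ∀ (i : Fin 5), ∀ t ∈ Ioo (r - ε0) (r + ε0),
      HasDerivAt (fun t => sol t i) (v (sol t) i) t :=
    fun i t ht => hasDerivAt_pi.1 (hsol t ht) i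
  set σ : ℝ → ℝ := fun t => sol t 0 with hσdef
  set σ1 : ℝ → ℝ := fun t => sol t 1
  set σ2 : ℝ → ℝ := fun t => sol t 2
  set σ3 : ℝ → ℝ := fun t => sol t 3
  have hmemIoo : ∀ t ∈ Ico r (r + ε0), t ∈ Ioo (r - ε0) (r + ε0) :=
    fun t ht => ⟨by linarith [ht.1], ht.2⟩
  -- the time component equals t
  have htime : ∀ t ∈ Ico r (r + ε0), sol t 4 = t := by
    intro t ht
    have hkey : ∀ x ∈ Icc r t, (fun u => sol u 4 - u) x = (fun u => sol u 4 - u) r := by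
      apply constant_of_has_deriv_right_zero
      · intro x hx
        have hx' : x ∈ Ioo (r - ε0) (r + ε0) :=
          ⟨by linarith [hx.1], lt_of_le_of_lt hx.2 ht.2⟩
        exact ((hcomp 4 x hx').sub (hasDerivAt_id x)).continuousAt.continuousWithinAt
      · intro x hx
        have hx' : x ∈ Ioo (r - ε0) (r + ε0) := ⟨by linarith [hx.1], by linarith [hx.2, ht.2]⟩
        have h := (hcomp 4 x hx').sub (hasDerivAt_id x)
        have hv4 : v (sol x) 4 = 1 := by simp [hv]
        rw [hv4, sub_self] at h
        exact h.hasDerivWithinAt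
    have h4r : sol r 4 = r := by rw [hsol0]; simp [hx₀]
    have := hkey t (right_mem_Icc.2 ht.1)
    simp only [h4r, sub_self] at this
    linarith [this]
  have hrIoo : r ∈ Ioo (r - ε0) (r + ε0) := ⟨by linarith, by linarith⟩
  have hσr : σ r = ℓ := by show sol r 0 = ℓ; rw [hsol0]; simp [hx₀]
  have hcontσ : ContinuousAt σ r := (hcomp 0 r hrIoo).continuousAt
  have hev : ∀ᶠ t in 𝓝 r, 0 < σ t := hcontσ (Ioi_mem_nhds (by rw [hσr]; exact hℓ))
  obtain ⟨δ, hδ, hδ'⟩ := Metric.eventually_nhds_iff.1 hev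
  refine ⟨min ε0 δ, σ, σ1, σ2, σ3, lt_min hε0 hδ, hσr, ?_, ?_, ?_, ?_, ?_, ?_, ?_, ?_⟩
  · show sol r 1 = L1; rw [hsol0]; simp [hx₀]
  · show sol r 2 = L2; rw [hsol0]; simp [hx₀]
  · show sol r 3 = L3; rw [hsol0]; simp [hx₀]
  · intro t ht
    apply hδ'
    rw [Real.dist_eq, abs_of_nonneg (by linarith [ht.1])]
    have := ht.2
    have hm : min ε0 δ ≤ δ := min_le_right _ _
    linarith
  · intro t ht
    have ht' : t ∈ Ico r (r + ε0) := ⟨ht.1, by linarith [ht.2, min_le_left ε0 δ]⟩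
    have h := hcomp 0 t (hmemIoo t ht')
    have hve : v (sol t) 0 = σ1 t := by simp [hv]; rfl
    rwa [hve] at h
  · intro t ht
    have ht' : t ∈ Ico r (r + ε0) := ⟨ht.1, by linarith [ht.2, min_le_left ε0 δ]⟩
    have h := hcomp 1 t (hmemIoo t ht')
    have hve : v (sol t) 1 = σ2 t := by simp [hv]; rfl
    rwa [hve] at h
  · intro t ht
    have ht' : t ∈ Ico r (r + ε0) := ⟨ht.1, by linarith [ht.2, min_le_left ε0 δ]⟩
    have h := hcomp 2 t (hmemIoo t ht')
    have hve : v (sol t) 2 = σ3 t := by simp [hv]; rfl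
    rwa [hve] at h
  · intro t ht
    have ht' : t ∈ Ico r (r + ε0) := ⟨ht.1, by linarith [ht.2, min_le_left ε0 δ]⟩
    have h := hcomp 3 t (hmemIoo t ht')
    have hve : v (sol t) 3 =
        (-α * (σ t - t * σ1 t) - m * σ t ^ (m-1) * σ1 t * σ3 t) * ((σ t) ^ m)⁻¹ := by
      simp only [hv]
      show (-α * (sol t 0 - sol t 4 * sol t 1) -
        m * sol t 0 ^ (m-1) * sol t 1 * sol t 3) * ((sol t 0) ^ m)⁻¹ = _
      rw [htime t ht']
    rwa [hve] at h


lemma antitoneOn_of_hasDerivAt_nonpos'' {φ ψ : ℝ → ℝ} {a b : ℝ}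
    (hd : ∀ y ∈ Icc a b, HasDerivAt φ (ψ y) y) (h0 : ∀ y ∈ Ioo a b, ψ y ≤ 0) :
    AntitoneOn φ (Icc a b) := by
  apply antitoneOn_of_deriv_nonpos (convex_Icc a b)
      (fun y hy => (hd y hy).continuousAt.continuousWithinAt)
  · rw [interior_Icc]
    exact fun y hy => ((hd y (Ioo_subset_Icc_self hy)).differentiableAt).differentiableWithinAt
  · rw [interior_Icc]
    intro y hy
    rw [(hd y (Ioo_subset_Icc_self hy)).deriv]
    exact h0 y hy

/-- Bound `φ b ≤ φ a + K (b - a)` from a derivative bound. -/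
lemma le_slope_of_hasDerivAt {φ ψ : ℝ → ℝ} {a b K : ℝ} (hab : a ≤ b)
    (hd : ∀ y ∈ Icc a b, HasDerivAt φ (ψ y) y) (hK : ∀ y ∈ Ioo a b, ψ y ≤ K) :
    φ b ≤ φ a + K * (b - a) := by
  have h := antitoneOn_of_hasDerivAt_nonpos''
    (φ := fun y => φ y - K * y) (ψ := fun y => ψ y - K)
    (fun y hy => ((hd y hy).sub ((hasDerivAt_id y).const_mul K)).congr_deriv (by ring))
    (fun y hy => by linarith [hK y hy])
  have := h (left_mem_Icc.2 hab) (right_mem_Icc.2 hab) hab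
  simp only at this
  linarith

lemma ge_slope_of_hasDerivAt {φ ψ : ℝ → ℝ} {a b K : ℝ} (hab : a ≤ b)
    (hd : ∀ y ∈ Icc a b, HasDerivAt φ (ψ y) y) (hK : ∀ y ∈ Ioo a b, K ≤ ψ y) :
    φ a + K * (b - a) ≤ φ b := by
  have h := le_slope_of_hasDerivAt (φ := fun y => -φ y) (ψ := fun y => -ψ y) (K := -K) hab
    (fun y hy => (hd y hy).neg) (fun y hy => by linarith [hK y hy])
  linarith

/-- A function continuous on `[a, r)` converging at `r⁻` is bounded below on `[a, r)`,
with a bound that is either `K₀` (any fixed value `< L`) or a value of the function. -/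
lemma lower_bd_of_tendsto {φ : ℝ → ℝ} {a r L K₀ : ℝ} (har : a < r) (hK₀ : K₀ < L)
    (hcont : ∀ x ∈ Ico a r, ContinuousAt φ x)
    (htend : Tendsto φ (𝓝[<] r) (𝓝 L)) :
    ∃ z ∈ Ico a r, ∀ y ∈ Ico a r, min (φ z) K₀ ≤ φ y := by
  have hev : ∀ᶠ y in 𝓝[<] r, K₀ < φ y := htend (Ioi_mem_nhds hK₀)
  obtain ⟨b, hb, hsub⟩ := mem_nhdsLT_iff_exists_Ico_subset.1 hev
  set b' := max a (max b (a - 1)) with hb'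
  have hab' : a ≤ b' := le_max_left _ _
  have hb'r : b' < r := by
    rw [hb']
    apply max_lt har (max_lt hb.out (by linarith))
  have hcpt : IsCompact (Icc a b') := isCompact_Icc
  have hconti : ContinuousOn φ (Icc a b') := fun x hx =>
    (hcont x ⟨hx.1, lt_of_le_of_lt hx.2 hb'r⟩).continuousWithinAt
  obtain ⟨z, hz, hzmin⟩ := hcpt.exists_isMinOn (nonempty_Icc.2 hab') hconti
  refine ⟨z, ⟨hz.1, lt_of_le_of_lt hz.2 hb'r⟩, ?_⟩
  intro y hy
  rcases le_or_gt y b' with h | h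
  · exact le_trans (min_le_left _ _) (hzmin ⟨hy.1, h⟩)
  · have : y ∈ Ico b r := ⟨le_trans (le_max_left b (a-1)) (le_trans (le_max_right a _) h.le), hy.2⟩
    exact le_trans (min_le_right _ _) (hsub this).le


lemma glue_contOn {r ε : ℝ} (hr : 0 < r) (hε : 0 < ε) {φ σ : ℝ → ℝ}
    (hφ : ContinuousOn φ (Ico 0 r))
    (hσ : ∀ y ∈ Ico r (r + ε), ContinuousAt σ y)
    (hφσ : Tendsto φ (𝓝[<] r) (𝓝 (σ r))) :
    ContinuousOn (fun y => if y < r then φ y else σ y) (Ico 0 (r + ε)) := by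
  set G : ℝ → ℝ := fun y => if y < r then φ y else σ y with hG
  intro y hy
  rcases lt_trichotomy y r with hyr | hyq | hyr
  · have hset : Ico 0 (r + ε) ∩ Iio r = Ico 0 r := by
      rw [Ico_inter_Iio, min_eq_right (by linarith)]
    have h1 : ContinuousWithinAt φ (Ico 0 (r + ε)) y := by
      have := hφ y ⟨hy.1, hyr⟩
      rw [← hset] at this
      exact (continuousWithinAt_inter (Iio_mem_nhds hyr)).1 this
    show ContinuousWithinAt G (Ico 0 (r + ε)) y
    unfold ContinuousWithinAt at h1 ⊢
    rw [show G y = φ y by simp [hG, hyr]]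
    refine h1.congr' ?_
    filter_upwards [mem_nhdsWithin_of_mem_nhds (Iio_mem_nhds hyr)] with z hz
    simp [hG, show z < r from hz]
  · subst hyq
    show ContinuousWithinAt G (Ico 0 (y + ε)) y
    unfold ContinuousWithinAt
    rw [show G y = σ y by simp [hG]]
    have hsplit : Ico 0 (y + ε) = (Ico 0 (y + ε) ∩ Iio y) ∪ (Ico 0 (y + ε) ∩ Ici y) := by
      rw [← inter_union_distrib_left, Iio_union_Ici, inter_univ]
    rw [hsplit, nhdsWithin_union, tendsto_sup]
    constructor
    · have h1 : Tendsto φ (𝓝[Ico 0 (y + ε) ∩ Iio y] y) (𝓝 (σ y)) :=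
        hφσ.mono_left (nhdsWithin_mono _ inter_subset_right)
      refine h1.congr' ?_
      filter_upwards [self_mem_nhdsWithin] with z hz
      simp [hG, show z < y from hz.2]
    · have h1 : Tendsto σ (𝓝[Ico 0 (y + ε) ∩ Ici y] y) (𝓝 (σ y)) :=
        ((hσ y ⟨le_rfl, by linarith⟩).tendsto).mono_left nhdsWithin_le_nhds
      refine h1.congr' ?_
      filter_upwards [self_mem_nhdsWithin] with z hz
      simp [hG, not_lt.2 (mem_Ici.1 hz.2)]
  · have h1 : ContinuousAt G y := by
      have h2 := hσ y ⟨hyr.le, hy.2⟩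
      refine h2.congr ?_
      filter_upwards [Ioi_mem_nhds hyr] with z hz
      simp [hG, not_lt.2 (le_of_lt (mem_Ioi.1 hz))]
    exact h1.continuousWithinAt


lemma setEReal (b : ℝ) : {y : ℝ | 0 ≤ y ∧ (y : EReal) < ((b : ℝ) : EReal)} = Ico 0 b := by
  ext y; simp [EReal.coe_lt_coe_iff]

lemma setEReal' (b : ℝ) : {y : ℝ | 0 < y ∧ (y : EReal) < ((b : ℝ) : EReal)} = Ioo 0 b := by
  ext y; simp [EReal.coe_lt_coe_iff]

theorem stmt5 (m α : ℝ) (hm0 : 0 < m) (hm4 : m ≤ 4) (hα : 0 < α)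
    (yM : EReal) (hyM : 0 < yM)
    (f f1 f2 f3 f4 : ℝ → ℝ)
    (hC4 : C4On {y : ℝ | 0 ≤ y ∧ (y : EReal) < yM} f f1 f2 f3 f4)
    (hpos : ∀ y : ℝ, 0 ≤ y → (y : EReal) < yM → 0 < f y)
    (hODE : ProfileODE m α {y : ℝ | 0 < y ∧ (y : EReal) < yM} f f1 f3 f4)
    -- `f` admits no extension to a positive C⁴ solution on a strictly larger interval
    (hmax : ¬ ∃ (yM' : EReal) (g g1 g2 g3 g4 : ℝ → ℝ), yM < yM' ∧
      C4On {y : ℝ | 0 ≤ y ∧ (y : EReal) < yM'} g g1 g2 g3 g4 ∧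
      (∀ y : ℝ, 0 ≤ y → (y : EReal) < yM' → 0 < g y) ∧
      ProfileODE m α {y : ℝ | 0 < y ∧ (y : EReal) < yM'} g g1 g3 g4 ∧
      (∀ y : ℝ, 0 ≤ y → (y : EReal) < yM → g y = f y))
    (y₀ : ℝ) (hy₀ : 0 < y₀) (hy₀M : (y₀ : EReal) < yM)
    (hSigmaMinus : y₀ * f1 y₀ < f y₀ ∧ f2 y₀ < 0 ∧ f3 y₀ < 0) :
    ∃ yMr : ℝ, yM = (yMr : EReal) ∧ Tendsto f (𝓝[<] yMr) (𝓝 0) := by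

  obtain ⟨hS1, hS2, hS3⟩ := hSigmaMinus
  obtain ⟨hfD, hf1D, hf2D, hf3D, hf4C⟩ := hC4
  -- the domain is a neighborhood of positive points below yM
  have hnhds : ∀ y : ℝ, 0 < y → (y : EReal) < yM →
      {y : ℝ | 0 ≤ y ∧ (y : EReal) < yM} ∈ 𝓝 y := by
    intro y hy hyM'
    obtain ⟨z, hz1, hz2⟩ := EReal.exists_between_coe_real hyM'
    have hyz : y < z := by exact_mod_cast hz1
    refine mem_of_superset (Ioo_mem_nhds hy hyz) ?_
    intro w hw
    exact ⟨hw.1.le, lt_trans (by exact_mod_cast hw.2) hz2⟩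
  have hfd' : ∀ y : ℝ, 0 < y → (y : EReal) < yM → HasDerivAt f (f1 y) y :=
    fun y h1 h2 => (hfD y ⟨h1.le, h2⟩).hasDerivAt (hnhds y h1 h2)
  have hf1d' : ∀ y : ℝ, 0 < y → (y : EReal) < yM → HasDerivAt f1 (f2 y) y :=
    fun y h1 h2 => (hf1D y ⟨h1.le, h2⟩).hasDerivAt (hnhds y h1 h2)
  have hf2d' : ∀ y : ℝ, 0 < y → (y : EReal) < yM → HasDerivAt f2 (f3 y) y :=
    fun y h1 h2 => (hf2D y ⟨h1.le, h2⟩).hasDerivAt (hnhds y h1 h2)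
  have hf3d' : ∀ y : ℝ, 0 < y → (y : EReal) < yM → HasDerivAt f3 (f4 y) y :=
    fun y h1 h2 => (hf3D y ⟨h1.le, h2⟩).hasDerivAt (hnhds y h1 h2)
  have hcoe : ∀ a b : ℝ, a ≤ b → (b : EReal) < yM → (a : EReal) < yM :=
    fun a b hab h => lt_of_le_of_lt (EReal.coe_le_coe_iff.2 hab) h
  -- persistence of f3 < 0
  have hpers : ∀ b : ℝ, y₀ ≤ b → (b : EReal) < yM → ∀ y ∈ Icc y₀ b, f3 y < 0 := by
    intro b hb hbM
    have hmem : ∀ y ∈ Icc y₀ b, 0 < y ∧ (y : EReal) < yM :=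
      fun y hy => ⟨lt_of_lt_of_le hy₀ hy.1, hcoe y b hy.2 hbM⟩
    exact f3_persists hα hy₀ hb
      (fun y hy => hfd' y (hmem y hy).1 (hmem y hy).2)
      (fun y hy => hf1d' y (hmem y hy).1 (hmem y hy).2)
      (fun y hy => hf2d' y (hmem y hy).1 (hmem y hy).2)
      (fun y hy => hf3d' y (hmem y hy).1 (hmem y hy).2)
      (fun y hy => hpos y (hmem y hy).1.le (hmem y hy).2)
      (fun y hy => hODE y ⟨(hmem y hy).1, (hmem y hy).2⟩)
      hS1 hS2 hS3
  -- f2 ≤ f2 y₀ beyond y₀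
  have hf2le : ∀ b : ℝ, y₀ ≤ b → (b : EReal) < yM → f2 b ≤ f2 y₀ := by
    intro b hb hbM
    have := le_slope_of_hasDerivAt (φ := f2) (ψ := f3) (K := 0) hb
      (fun y hy => hf2d' y (lt_of_lt_of_le hy₀ hy.1) (hcoe y b hy.2 hbM))
      (fun y hy => (hpers b hb hbM y (Ioo_subset_Icc_self hy)).le)
    linarith
  -- yM is not ⊤
  have hyMtop : yM ≠ ⊤ := by
    intro htop
    have hall : ∀ y : ℝ, (y : EReal) < yM := fun y => htop ▸ EReal.coe_lt_top y
    have hf1lin : ∀ b : ℝ, y₀ ≤ b → f1 b ≤ f1 y₀ + f2 y₀ * (b - y₀) := by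
      intro b hb
      exact le_slope_of_hasDerivAt hb
        (fun y hy => hf1d' y (lt_of_lt_of_le hy₀ hy.1) (hall y))
        (fun y hy => hf2le y hy.1.le (hall y))
    set B1 := y₀ + max 1 ((1 + |f1 y₀|) / (-f2 y₀)) with hB1
    have hB1y₀ : y₀ ≤ B1 := by
      rw [hB1]; nlinarith [le_max_left (1:ℝ) ((1 + |f1 y₀|) / (-f2 y₀))]
    have hf1B : ∀ y : ℝ, B1 ≤ y → f1 y ≤ -1 := by
      intro y hy
      have h1 := hf1lin y (hB1y₀.trans hy)
      have h2 : (1 + |f1 y₀|) / (-f2 y₀) ≤ y - y₀ := by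
        have := le_max_right (1:ℝ) ((1 + |f1 y₀|) / (-f2 y₀))
        rw [hB1] at hy; linarith
      have h3 : f2 y₀ * (y - y₀) ≤ -(1 + |f1 y₀|) := by
        rw [div_le_iff₀ (by linarith : (0:ℝ) < -f2 y₀)] at h2
        nlinarith
      have h4 : f1 y₀ ≤ |f1 y₀| := le_abs_self _
      linarith
    set b := B1 + f B1 + 1 with hbdef
    have hfB1pos : 0 < f B1 := hpos B1 (by linarith) (hall B1)
    have hbB1 : B1 ≤ b := by rw [hbdef]; linarith
    have hfb := le_slope_of_hasDerivAt (φ := f) (ψ := f1) (K := -1) hbB1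
      (fun y hy => hfd' y (by linarith [hy.1]) (hall y))
      (fun y hy => hf1B y hy.1.le)
    have : f b ≤ -1 := by rw [hbdef] at hfb ⊢; linarith
    have := hpos b (by linarith) (hall b)
    linarith
  -- yM is a real number r
  obtain ⟨r, hr⟩ : ∃ r : ℝ, yM = (r : EReal) := by
    induction yM with
    | bot => exact absurd hyM (by simp)
    | coe r => exact ⟨r, rfl⟩
    | top => exact absurd rfl hyMtop
  have hy₀r : y₀ < r := by rw [hr] at hy₀M; exact_mod_cast hy₀M
  have hr0 : 0 < r := by rw [hr] at hyM; exact_mod_cast hyM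
  have hlt : ∀ y : ℝ, y < r → (y : EReal) < yM := fun y h => by
    rw [hr]; exact_mod_cast h
  have hfd2 : ∀ y ∈ Ioo 0 r, HasDerivAt f (f1 y) y :=
    fun y hy => hfd' y hy.1 (hlt y hy.2)
  have hf1d2 : ∀ y ∈ Ioo 0 r, HasDerivAt f1 (f2 y) y :=
    fun y hy => hf1d' y hy.1 (hlt y hy.2)
  have hf2d2 : ∀ y ∈ Ioo 0 r, HasDerivAt f2 (f3 y) y :=
    fun y hy => hf2d' y hy.1 (hlt y hy.2)
  have hf3d2 : ∀ y ∈ Ioo 0 r, HasDerivAt f3 (f4 y) y :=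
    fun y hy => hf3d' y hy.1 (hlt y hy.2)
  have hpos2 : ∀ y ∈ Ico 0 r, 0 < f y := fun y hy => hpos y hy.1 (hlt y hy.2)
  have hODE2 : ∀ y ∈ Ioo 0 r,
      α * (f y - y * f1 y) + m * f y ^ (m - 1) * f1 y * f3 y + f y ^ m * f4 y = 0 :=
    fun y hy => hODE y ⟨hy.1, hlt y hy.2⟩
  have hsubI : ∀ y ∈ Ico y₀ r, y ∈ Ioo 0 r := fun y hy => ⟨lt_of_lt_of_le hy₀ hy.1, hy.2⟩
  have hf3neg2 : ∀ y ∈ Ico y₀ r, f3 y < 0 :=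
    fun y hy => hpers y hy.1 (hlt y hy.2) y (right_mem_Icc.2 hy.1)
  have hf2le2 : ∀ y ∈ Ico y₀ r, f2 y ≤ f2 y₀ := fun y hy => hf2le y hy.1 (hlt y hy.2)
  have hIccsub : ∀ x y : ℝ, y₀ ≤ x → y < r → Icc x y ⊆ Ioo 0 r := by
    intro x y hx hy z hz
    exact ⟨lt_of_lt_of_le hy₀ (hx.trans hz.1), lt_of_le_of_lt hz.2 hy⟩
  have hf1anti : ∀ x y : ℝ, x ∈ Ico y₀ r → y ∈ Ico y₀ r → x ≤ y → f1 y ≤ f1 x := by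
    intro x y hx hy hxy
    have := le_slope_of_hasDerivAt (φ := f1) (ψ := f2) (K := 0) hxy
      (fun z hz => hf1d2 z (hIccsub x y hx.1 hy.2 hz))
      (fun z hz => by
        have : z ∈ Ico y₀ r := ⟨hx.1.trans hz.1.le, lt_trans hz.2 hy.2⟩
        linarith [hf2le2 z this, hS2])
    linarith
  set Cf := f y₀ + |f1 y₀| * (r - y₀) with hCf
  have hfy₀mem : y₀ ∈ Ico y₀ r := ⟨le_rfl, hy₀r⟩
  have hfub : ∀ y ∈ Ico y₀ r, f y ≤ Cf := by
    intro y hy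
    have h1 := le_slope_of_hasDerivAt (φ := f) (ψ := f1) (K := f1 y₀) hy.1
      (fun z hz => hfd2 z (hIccsub y₀ y le_rfl hy.2 hz))
      (fun z hz => hf1anti y₀ z hfy₀mem ⟨hz.1.le, lt_trans hz.2 hy.2⟩ hz.1.le)
    have h2 : f1 y₀ * (y - y₀) ≤ |f1 y₀| * (r - y₀) := by
      have ha := le_abs_self (f1 y₀)
      have hb := abs_nonneg (f1 y₀)
      nlinarith [hy.1, hy.2]
    rw [hCf]; linarith
  have hCfpos : 0 < Cf := lt_of_lt_of_le (hpos2 y₀ ⟨hy₀.le, hy₀r⟩) (hfub y₀ hfy₀mem)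
  -- existence of the limit ℓ of f at r⁻
  have hex : ∃ ℓ : ℝ, 0 ≤ ℓ ∧ Tendsto f (𝓝[<] r) (𝓝 ℓ) := by
    by_cases hc : ∃ a ∈ Ico y₀ r, f1 a < 0
    · obtain ⟨a, ha, hfa⟩ := hc
      have hanti : AntitoneOn f (Ioo a r) := by
        intro x hx y hy hxy
        have := le_slope_of_hasDerivAt (φ := f) (ψ := f1) (K := 0) hxy
          (fun z hz => hfd2 z (hIccsub x y (ha.1.trans hx.1.le) hy.2 hz))
          (fun z hz => by
            have hz' : z ∈ Ico y₀ r := ⟨ha.1.trans (hx.1.trans hz.1).le, lt_trans hz.2 hy.2⟩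
            linarith [hf1anti a z ha hz' (hx.1.trans hz.1).le])
        linarith
      have hne : (Ioo a r).Nonempty := nonempty_Ioo.2 ha.2
      have hbdd : BddBelow (f '' Ioo a r) := by
        refine ⟨0, ?_⟩
        rintro w ⟨z, hz, rfl⟩
        exact (hpos2 z ⟨le_trans hy₀.le (ha.1.trans hz.1.le), hz.2⟩).le
      refine ⟨sInf (f '' Ioo a r), ?_, hanti.tendsto_nhdsWithin_Ioo_left hne hbdd⟩
      refine le_csInf (hne.image f) ?_
      rintro w ⟨z, hz, rfl⟩
      exact (hpos2 z ⟨le_trans hy₀.le (ha.1.trans hz.1.le), hz.2⟩).le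
    · push_neg at hc
      have hmono : MonotoneOn f (Ioo y₀ r) := by
        intro x hx y hy hxy
        have := ge_slope_of_hasDerivAt (φ := f) (ψ := f1) (K := 0) hxy
          (fun z hz => hfd2 z (hIccsub x y hx.1.le hy.2 hz))
          (fun z hz => hc z ⟨hx.1.le.trans hz.1.le, lt_trans hz.2 hy.2⟩)
        linarith
      have hne : (Ioo y₀ r).Nonempty := nonempty_Ioo.2 hy₀r
      have hbdd : BddAbove (f '' Ioo y₀ r) := by
        refine ⟨Cf, ?_⟩
        rintro w ⟨z, hz, rfl⟩
        exact hfub z ⟨hz.1.le, hz.2⟩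
      refine ⟨sSup (f '' Ioo y₀ r), ?_, hmono.tendsto_nhdsWithin_Ioo_left hne hbdd⟩
      obtain ⟨z, hz⟩ := hne
      have := le_csSup hbdd (mem_image_of_mem f hz)
      linarith [hpos2 z ⟨le_trans hy₀.le hz.1.le, hz.2⟩]
  obtain ⟨ℓ, hℓ0, hℓtend⟩ := hex
  refine ⟨r, hr, ?_⟩
  have hmain : ℓ = 0 := by
    by_contra hℓne
    have hℓpos : 0 < ℓ := lt_of_le_of_ne hℓ0 (Ne.symm hℓne)
    -- positive lower bound for f
    have hfcontAt : ∀ x ∈ Ico y₀ r, ContinuousAt f x :=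
      fun x hx => (hfd2 x (hsubI x hx)).continuousAt
    obtain ⟨zc, hzcmem, hzcbd⟩ :=
      lower_bd_of_tendsto hy₀r (half_lt_self hℓpos) hfcontAt hℓtend
    set c := min (f zc) (ℓ / 2) with hc
    have hcpos : 0 < c := lt_min (hpos2 zc ⟨le_trans hy₀.le hzcmem.1, hzcmem.2⟩) (by positivity)
    have hflb : ∀ y ∈ Ico y₀ r, c ≤ f y := hzcbd
    -- the conserved quantity Φ
    have hfmne : ∀ y ∈ Ico y₀ r, f y ^ m ≠ 0 :=
      fun y hy => (Real.rpow_pos_of_pos (hpos2 y ⟨le_trans hy₀.le hy.1, hy.2⟩) m).ne'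
    have hfcontOn : ContinuousOn f (Ioo 0 r) :=
      fun x hx => (hfd2 x hx).continuousAt.continuousWithinAt
    have hFd : ∀ x ∈ Ico y₀ r, HasDerivAt (fun u => ∫ t in y₀..u, f t) (f x) x := by
      intro x hx
      apply intervalIntegral.integral_hasDerivAt_right
      · apply ContinuousOn.intervalIntegrable
        rw [uIcc_of_le hx.1]
        exact hfcontOn.mono (fun z hz => (hIccsub y₀ x le_rfl hx.2) hz)
      · exact hfcontOn.stronglyMeasurableAtFilter isOpen_Ioo x (hsubI x hx)
      · exact hfcontAt x hx
    set Φ : ℝ → ℝ := fun y => f y ^ m * f3 y + α * (2 * (∫ t in y₀..y, f t) - y * f y)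
      with hΦ
    have hΦd : ∀ x ∈ Ico y₀ r, HasDerivAt Φ 0 x := by
      intro x hx
      have hxI : x ∈ Ioo 0 r := hsubI x hx
      have hfx := hfd2 x hxI
      have hf1x := hf1d2 x hxI
      have hf3x := hf3d2 x hxI
      have hpow : HasDerivAt (fun y => f y ^ m) (f1 x * m * f x ^ (m - 1)) x :=
        hfx.rpow_const (Or.inl (hpos2 x ⟨hxI.1.le, hxI.2⟩).ne')
      have hmul : HasDerivAt (fun y => f y ^ m * f3 y)
          (f1 x * m * f x ^ (m - 1) * f3 x + f x ^ m * f4 x) x := hpow.mul hf3x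
      have hidf : HasDerivAt (fun y => y * f y) (1 * f x + x * f1 x) x :=
        (hasDerivAt_id x).mul hfx
      have htotal : HasDerivAt Φ
          (f1 x * m * f x ^ (m - 1) * f3 x + f x ^ m * f4 x +
            α * (2 * f x - (1 * f x + x * f1 x))) x :=
        hmul.add ((((hFd x hx).const_mul 2).sub hidf).const_mul α)
      have hODEx := hODE2 x hxI
      have hzero : f1 x * m * f x ^ (m - 1) * f3 x + f x ^ m * f4 x +
          α * (2 * f x - (1 * f x + x * f1 x)) = 0 := by
        linear_combination hODEx
      rwa [hzero] at htotal
    have hΦconst : ∀ x ∈ Ico y₀ r, Φ x = Φ y₀ := by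
      intro x hx
      have hkey := constant_of_has_deriv_right_zero (f := Φ) (a := y₀) (b := x)
        (fun z hz => (hΦd z ⟨hz.1, lt_of_le_of_lt hz.2 hx.2⟩).continuousAt.continuousWithinAt)
        (fun z hz => (hΦd z ⟨hz.1, lt_of_lt_of_le hz.2 (le_of_lt hx.2)⟩).hasDerivWithinAt)
      exact hkey x (right_mem_Icc.2 hx.1)
    -- the primitive F and its limit
    set F : ℝ → ℝ := fun y => ∫ t in y₀..y, f t with hF
    have hFy₀ : F y₀ = 0 := intervalIntegral.integral_same
    have hFub : ∀ y ∈ Ico y₀ r, F y ≤ Cf * (r - y₀) := by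
      intro y hy
      have h1 := le_slope_of_hasDerivAt (φ := F) (ψ := f) (K := Cf) hy.1
        (fun z hz => hFd z ⟨hz.1, lt_of_le_of_lt hz.2 hy.2⟩)
        (fun z hz => hfub z ⟨hz.1.le, lt_trans hz.2 hy.2⟩)
      rw [hFy₀] at h1
      nlinarith [hy.1, hy.2, hCfpos]
    have hFmono : MonotoneOn F (Ioo y₀ r) := by
      intro x hx y hy hxy
      have := ge_slope_of_hasDerivAt (φ := F) (ψ := f) (K := 0) hxy
        (fun z hz => hFd z ⟨hx.1.le.trans hz.1, lt_of_le_of_lt hz.2 hy.2⟩)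
        (fun z hz => (hpos2 z ⟨(le_trans hy₀.le (hx.1.le.trans hz.1.le)), lt_trans hz.2 hy.2⟩).le)
      linarith
    have hFne : (Ioo y₀ r).Nonempty := nonempty_Ioo.2 hy₀r
    have hFbdd : BddAbove (F '' Ioo y₀ r) := by
      refine ⟨Cf * (r - y₀), ?_⟩
      rintro w ⟨z, hz, rfl⟩
      exact hFub z ⟨hz.1.le, hz.2⟩
    set LF := sSup (F '' Ioo y₀ r) with hLF
    have hLFtend : Tendsto F (𝓝[<] r) (𝓝 LF) :=
      hFmono.tendsto_nhdsWithin_Ioo_left hFne hFbdd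
    -- limit of f3
    have hIcoev : Ico y₀ r ∈ 𝓝[<] r := Ico_mem_nhdsLT_of_mem ⟨hy₀r, le_rfl⟩
    have hf3eq : ∀ y ∈ Ico y₀ r, f3 y = (Φ y₀ - α * (2 * F y - y * f y)) / f y ^ m := by
      intro y hy
      have h := hΦconst y hy
      rw [eq_div_iff (hfmne y hy)]
      simp only [hΦ] at h
      linear_combination h
    have hℓmne : (ℓ : ℝ) ^ m ≠ 0 := (Real.rpow_pos_of_pos hℓpos m).ne'
    have hidt : Tendsto (fun y : ℝ => y) (𝓝[<] r) (𝓝 r) :=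
      (continuous_id.tendsto r).mono_left nhdsWithin_le_nhds
    have hrpowt : Tendsto (fun y => f y ^ m) (𝓝[<] r) (𝓝 (ℓ ^ m)) :=
      hℓtend.rpow_const (Or.inl hℓpos.ne')
    set L3 := (Φ y₀ - α * (2 * LF - r * ℓ)) / ℓ ^ m with hL3
    have htendf3 : Tendsto f3 (𝓝[<] r) (𝓝 L3) := by
      have hrhs : Tendsto (fun y => (Φ y₀ - α * (2 * F y - y * f y)) / f y ^ m)
          (𝓝[<] r) (𝓝 L3) := by
        exact (tendsto_const_nhds.sub
          (((hLFtend.const_mul 2).sub (hidt.mul hℓtend)).const_mul α)).div hrpowt hℓmne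
      refine hrhs.congr' ?_
      filter_upwards [hIcoev] with y hy
      exact (hf3eq y hy).symm
    -- lower bound for f3
    have hf3contAt : ∀ x ∈ Ico y₀ r, ContinuousAt f3 x :=
      fun x hx => (hf3d2 x (hsubI x hx)).continuousAt
    obtain ⟨z3, hz3mem, hz3bd⟩ :=
      lower_bd_of_tendsto hy₀r (show L3 - 1 < L3 by linarith) hf3contAt htendf3
    set K3 := min (f3 z3) (L3 - 1) with hK3
    have hf3lb : ∀ y ∈ Ico y₀ r, K3 ≤ f3 y := hz3bd
    -- bounds and limit for f2
    have hf2lb : ∀ y ∈ Ico y₀ r, f2 y₀ - |K3| * (r - y₀) ≤ f2 y := by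
      intro y hy
      have h1 := ge_slope_of_hasDerivAt (φ := f2) (ψ := f3) (K := K3) hy.1
        (fun z hz => hf2d2 z (hIccsub y₀ y le_rfl hy.2 hz))
        (fun z hz => hf3lb z ⟨hz.1.le, lt_trans hz.2 hy.2⟩)
      have h2 : -|K3| ≤ K3 := neg_abs_le K3
      have h3 := abs_nonneg K3
      nlinarith [hy.1, hy.2]
    have hf2anti : AntitoneOn f2 (Ioo y₀ r) := by
      intro x hx y hy hxy
      have := le_slope_of_hasDerivAt (φ := f2) (ψ := f3) (K := 0) hxy
        (fun z hz => hf2d2 z (hIccsub x y hx.1.le hy.2 hz))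
        (fun z hz => (hf3neg2 z ⟨hx.1.le.trans hz.1.le, lt_trans hz.2 hy.2⟩).le)
      linarith
    have hf2bdd : BddBelow (f2 '' Ioo y₀ r) := by
      refine ⟨f2 y₀ - |K3| * (r - y₀), ?_⟩
      rintro w ⟨z, hz, rfl⟩
      exact hf2lb z ⟨hz.1.le, hz.2⟩
    set L2 := sInf (f2 '' Ioo y₀ r) with hL2
    have htendf2 : Tendsto f2 (𝓝[<] r) (𝓝 L2) :=
      hf2anti.tendsto_nhdsWithin_Ioo_left hFne hf2bdd
    -- bounds and limit for f1
    set B2 := f2 y₀ - |K3| * (r - y₀) with hB2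
    have hf1lb : ∀ y ∈ Ico y₀ r, f1 y₀ - |B2| * (r - y₀) ≤ f1 y := by
      intro y hy
      have h1 := ge_slope_of_hasDerivAt (φ := f1) (ψ := f2) (K := B2) hy.1
        (fun z hz => hf1d2 z (hIccsub y₀ y le_rfl hy.2 hz))
        (fun z hz => hf2lb z ⟨hz.1.le, lt_trans hz.2 hy.2⟩)
      have h2 : -|B2| ≤ B2 := neg_abs_le B2
      have h3 := abs_nonneg B2
      nlinarith [hy.1, hy.2]
    have hf1anti' : AntitoneOn f1 (Ioo y₀ r) := by
      intro x hx y hy hxy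
      exact hf1anti x y ⟨hx.1.le, hx.2⟩ ⟨hy.1.le, hy.2⟩ hxy
    have hf1bdd : BddBelow (f1 '' Ioo y₀ r) := by
      refine ⟨f1 y₀ - |B2| * (r - y₀), ?_⟩
      rintro w ⟨z, hz, rfl⟩
      exact hf1lb z ⟨hz.1.le, hz.2⟩
    set L1 := sInf (f1 '' Ioo y₀ r) with hL1
    have htendf1 : Tendsto f1 (𝓝[<] r) (𝓝 L1) :=
      hf1anti'.tendsto_nhdsWithin_Ioo_left hFne hf1bdd
    -- limit of f4
    have hf4eq : ∀ y ∈ Ico y₀ r, f4 y =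
        (-α * (f y - y * f1 y) - m * f y ^ (m - 1) * f1 y * f3 y) * (f y ^ m)⁻¹ := by
      intro y hy
      have h := hODE2 y (hsubI y hy)
      rw [eq_comm, mul_inv_eq_iff_eq_mul₀ (hfmne y hy)]
      linear_combination -h
    set L4 := (-α * (ℓ - r * L1) - m * ℓ ^ (m - 1) * L1 * L3) * (ℓ ^ m)⁻¹ with hL4
    have hrpowt1 : Tendsto (fun y => f y ^ (m - 1)) (𝓝[<] r) (𝓝 (ℓ ^ (m - 1))) :=
      hℓtend.rpow_const (Or.inl hℓpos.ne')
    have htendf4 : Tendsto f4 (𝓝[<] r) (𝓝 L4) := by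
      have hrhs : Tendsto (fun y =>
          (-α * (f y - y * f1 y) - m * f y ^ (m - 1) * f1 y * f3 y) * (f y ^ m)⁻¹)
          (𝓝[<] r) (𝓝 L4) := by
        exact (((hℓtend.sub (hidt.mul htendf1)).const_mul (-α)).sub
          ((((hrpowt1.const_mul m)).mul htendf1).mul htendf3)).mul (hrpowt.inv₀ hℓmne)
      refine hrhs.congr' ?_
      filter_upwards [hIcoev] with y hy
      exact (hf4eq y hy).symm
    -- local solution to the right of r
    obtain ⟨ε, σ, σ1, σ2, σ3, hε, hσr, hσ1r, hσ2r, hσ3r, hσpos, hσd, hσ1d, hσ2d, hσ3d⟩ :=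
      local_solution m α L1 L2 L3 r hℓpos
    set σ4 : ℝ → ℝ := fun y =>
      (-α * (σ y - y * σ1 y) - m * σ y ^ (m - 1) * σ1 y * σ3 y) * ((σ y) ^ m)⁻¹ with hσ4
    have hσ4r : σ4 r = L4 := by simp only [hσ4]; rw [hσr, hσ1r, hσ3r]
    have hsets : {y : ℝ | 0 ≤ y ∧ (y : EReal) < yM} = Ico 0 r := by
      rw [hr]; exact setEReal r
    have hfD2 : ∀ y ∈ Ico 0 r, HasDerivWithinAt f (f1 y) (Ico 0 r) y := by
      intro y hy; have := hfD y (by rw [hsets]; exact hy); rwa [hsets] at this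
    have hf1D2 : ∀ y ∈ Ico 0 r, HasDerivWithinAt f1 (f2 y) (Ico 0 r) y := by
      intro y hy; have := hf1D y (by rw [hsets]; exact hy); rwa [hsets] at this
    have hf2D2 : ∀ y ∈ Ico 0 r, HasDerivWithinAt f2 (f3 y) (Ico 0 r) y := by
      intro y hy; have := hf2D y (by rw [hsets]; exact hy); rwa [hsets] at this
    have hf3D2 : ∀ y ∈ Ico 0 r, HasDerivWithinAt f3 (f4 y) (Ico 0 r) y := by
      intro y hy; have := hf3D y (by rw [hsets]; exact hy); rwa [hsets] at this
    have hf4C2 : ContinuousOn f4 (Ico 0 r) := by rw [← hsets]; exact hf4C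
    set G : ℝ → ℝ := fun y => if y < r then f y else σ y with hGdef
    set G1 : ℝ → ℝ := fun y => if y < r then f1 y else σ1 y with hG1def
    set G2 : ℝ → ℝ := fun y => if y < r then f2 y else σ2 y with hG2def
    set G3 : ℝ → ℝ := fun y => if y < r then f3 y else σ3 y with hG3def
    set G4 : ℝ → ℝ := fun y => if y < r then f4 y else σ4 y with hG4def
    have hGd : ∀ y ∈ Ico 0 (r + ε), HasDerivWithinAt G (G1 y) (Ico 0 (r + ε)) y :=
      glue_hasDeriv hr0 hε hfD2 hσd (hσr ▸ hℓtend) (hσ1r ▸ htendf1)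
    have hG1d : ∀ y ∈ Ico 0 (r + ε), HasDerivWithinAt G1 (G2 y) (Ico 0 (r + ε)) y :=
      glue_hasDeriv hr0 hε hf1D2 hσ1d (hσ1r ▸ htendf1) (hσ2r ▸ htendf2)
    have hG2d : ∀ y ∈ Ico 0 (r + ε), HasDerivWithinAt G2 (G3 y) (Ico 0 (r + ε)) y :=
      glue_hasDeriv hr0 hε hf2D2 hσ2d (hσ2r ▸ htendf2) (hσ3r ▸ htendf3)
    have hG3d : ∀ y ∈ Ico 0 (r + ε), HasDerivWithinAt G3 (G4 y) (Ico 0 (r + ε)) y :=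
      glue_hasDeriv hr0 hε hf3D2 (τ := σ4) hσ3d (hσ3r ▸ htendf3) (hσ4r ▸ htendf4)
    have hσ4cont : ∀ y ∈ Ico r (r + ε), ContinuousAt σ4 y := by
      intro y hy
      have h0 := (hσd y hy).continuousAt
      have h1 := (hσ1d y hy).continuousAt
      have h3 := (hσ3d y hy).continuousAt
      have hσyne : σ y ≠ 0 := (hσpos y hy).ne'
      have hσmne : σ y ^ m ≠ 0 := (Real.rpow_pos_of_pos (hσpos y hy) m).ne'
      exact ((continuousAt_const.mul (h0.sub (continuousAt_id.mul h1))).sub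
        (((continuousAt_const.mul (h0.rpow_const (Or.inl hσyne))).mul h1).mul h3)).mul
        ((h0.rpow_const (Or.inl hσyne)).inv₀ hσmne)
    have hG4c : ContinuousOn G4 (Ico 0 (r + ε)) :=
      glue_contOn hr0 hε hf4C2 hσ4cont (hσ4r ▸ htendf4)
    have hGpos : ∀ y : ℝ, 0 ≤ y → (y : EReal) < ((r + ε : ℝ) : EReal) → 0 < G y := by
      intro y h0 hyR
      have hyR' : y < r + ε := by exact_mod_cast hyR
      by_cases hyr : y < r
      · simp only [hGdef, if_pos hyr]; exact hpos2 y ⟨h0, hyr⟩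
      · simp only [hGdef, if_neg hyr]; exact hσpos y ⟨not_lt.1 hyr, hyR'⟩
    have hGode : ProfileODE m α {y : ℝ | 0 < y ∧ (y : EReal) < ((r + ε : ℝ) : EReal)}
        G G1 G3 G4 := by
      intro y hy
      obtain ⟨hy0, hyR⟩ := hy
      have hyR' : y < r + ε := by exact_mod_cast hyR
      by_cases hyr : y < r
      · simp only [hGdef, hG1def, hG3def, hG4def, if_pos hyr]
        exact hODE2 y ⟨hy0, hyr⟩
      · simp only [hGdef, hG1def, hG3def, hG4def, if_neg hyr, hσ4]
        have hne : σ y ^ m ≠ 0 :=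
          (Real.rpow_pos_of_pos (hσpos y ⟨not_lt.1 hyr, hyR'⟩) m).ne'
        field_simp
        ring
    have hGagree : ∀ y : ℝ, 0 ≤ y → (y : EReal) < yM → G y = f y := by
      intro y h0 hyM'
      rw [hr] at hyM'
      have hylt : y < r := by exact_mod_cast hyM'
      simp [hGdef, hylt]
    refine hmax ⟨((r + ε : ℝ) : EReal), G, G1, G2, G3, G4, ?_, ?_, hGpos, hGode, hGagree⟩
    · rw [hr]; exact_mod_cast (by linarith : r < r + ε)
    · rw [show {y : ℝ | 0 ≤ y ∧ (y : EReal) < ((r + ε : ℝ) : EReal)} = Ico 0 (r + ε) from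
        setEReal (r + ε)]
      exact ⟨hGd, hG1d, hG2d, hG3d, hG4c⟩
  rw [hmain] at hℓtend
  exact hℓtend
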